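/- If a convex polygon is invariant under the rotation by 180° about a point O (i.e., the point reflection through O maps the polygon onto itself, permuting the lines containing its sides), then the sum of distances V(p) from any interior point p to the lines containing the sides is constant. -/

import Mathlib

open Metric
open scoped InnerProductSpace

noncomputable section

abbrev E2 := EuclideanSpace ℝ (Fin 2)

/-- The line `{q : αᵢ·q + γᵢ = 0}` in ℝ². -/
def line2 (a : E2) (γ : ℝ) : Set E2 := {q : E2 | ⟪a, q⟫_ℝ + γ = 0}

/-- The sum of the distances from `p` to the lines `Lᵢ`. -/
def sumDist {n : ℕ} (a : Fin n → E2) (γ : Fin n → ℝ) (p : E2) : ℝ :=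
  ∑ i, infDist p (line2 (a i) (γ i))

lemma line2_nonempty (a : E2) (ha : a ≠ 0) (γ : ℝ) : (line2 a γ).Nonempty := by
  refine ⟨(-γ / ‖a‖ ^ 2) • a, ?_⟩
  have h : ‖a‖ ≠ 0 := norm_ne_zero_iff.mpr ha
  simp only [line2, Set.mem_setOf_eq, real_inner_smul_right, real_inner_self_eq_norm_sq]
  field_simp
  ring

lemma infDist_line2 (a : E2) (ha : a ≠ 0) (γ : ℝ) (p : E2) :
    infDist p (line2 a γ) = |⟪a, p⟫_ℝ + γ| / ‖a‖ := by
  have hn : ‖a‖ ≠ 0 := norm_ne_zero_iff.mpr ha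
  have hn0 : (0:ℝ) < ‖a‖ := norm_pos_iff.mpr ha
  set t : ℝ := (⟪a, p⟫_ℝ + γ) / ‖a‖ ^ 2 with ht
  have hq0 : p - t • a ∈ line2 a γ := by
    simp only [line2, Set.mem_setOf_eq, inner_sub_right, real_inner_smul_right,
      real_inner_self_eq_norm_sq, ht]
    field_simp
    ring
  refine le_antisymm ?_ ?_
  · calc infDist p (line2 a γ) ≤ dist p (p - t • a) := infDist_le_dist_of_mem hq0
      _ = |⟪a, p⟫_ℝ + γ| / ‖a‖ := by
          rw [dist_eq_norm]
          simp only [sub_sub_cancel, norm_smul, Real.norm_eq_abs, ht, abs_div, abs_pow, abs_norm]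
          rw [sq]
          field_simp
  · by_contra hlt
    push_neg at hlt
    obtain ⟨y, hy, hdy⟩ := (infDist_lt_iff (line2_nonempty a ha γ)).mp hlt
    have hyy : ⟪a, y⟫_ℝ = -γ := by
      have := hy; simp only [line2, Set.mem_setOf_eq] at this; linarith
    have h1 : |⟪a, p⟫_ℝ + γ| = |⟪a, p - y⟫_ℝ| := by
      rw [inner_sub_right, hyy]; ring_nf
    have h2 : |⟪a, p - y⟫_ℝ| ≤ ‖a‖ * ‖p - y‖ := abs_real_inner_le_norm a (p - y)
    rw [← dist_eq_norm] at h2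
    rw [h1] at hdy
    have : |⟪a, p - y⟫_ℝ| / ‖a‖ ≤ dist p y := by
      rw [div_le_iff₀ hn0]; linarith [h2, mul_comm ‖a‖ (dist p y)]
    linarith

/-- Two lines with the given normal form coincide iff the data are proportional. -/
lemma line2_eq_imp (a b : E2) (ha : a ≠ 0) (hb : b ≠ 0) (c d : ℝ)
    (h : line2 a c = line2 b d) : ∃ l : ℝ, l ≠ 0 ∧ b = l • a ∧ d = l * c := by
  have hn : (‖a‖:ℝ) ^ 2 ≠ 0 := pow_ne_zero 2 (norm_ne_zero_iff.mpr ha)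
  set l : ℝ := ⟪a, b⟫_ℝ / ‖a‖ ^ 2 with hl
  set x0 : E2 := (-c / ‖a‖ ^ 2) • a with hx0
  have hx0mem : x0 ∈ line2 a c := by
    simp only [line2, Set.mem_setOf_eq, hx0, real_inner_smul_right,
      real_inner_self_eq_norm_sq]
    field_simp
    ring
  -- any vector orthogonal to a is killed by b
  have horth : ∀ v : E2, ⟪a, v⟫_ℝ = 0 → ⟪b, v⟫_ℝ = 0 := by
    intro v hv
    have hmem : x0 + v ∈ line2 a c := by
      simp only [line2, Set.mem_setOf_eq, inner_add_right, hv] at hx0mem ⊢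
      simpa using hx0mem
    have hx0' : x0 ∈ line2 b d := h ▸ hx0mem
    have hmem' : x0 + v ∈ line2 b d := h ▸ hmem
    simp only [line2, Set.mem_setOf_eq, inner_add_right] at hx0' hmem'
    have := real_inner_comm b v
    linarith [real_inner_comm v b]
  set v : E2 := b - l • a with hv
  have hav : ⟪a, v⟫_ℝ = 0 := by
    simp only [hv, inner_sub_right, real_inner_smul_right, real_inner_self_eq_norm_sq, hl]
    field_simp
    ring
  have hbv : ⟪b, v⟫_ℝ = 0 := horth v hav
  have hvv : ⟪v, v⟫_ℝ = 0 := by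
    have : ⟪v, v⟫_ℝ = ⟪b, v⟫_ℝ - l * ⟪a, v⟫_ℝ := by
      simp only [hv, inner_sub_left, real_inner_smul_left]
    rw [this, hbv, hav]; ring
  have hveq : v = 0 := by
    have := inner_self_eq_zero (𝕜 := ℝ) (x := v)
    exact this.mp hvv
  have hbla : b = l • a := by
    have : b - l • a = 0 := hveq
    linear_combination (norm := module) this
  have hlne : l ≠ 0 := by
    intro h0
    apply hb
    rw [hbla, h0, zero_smul]
  refine ⟨l, hlne, hbla, ?_⟩
  have hx0' : x0 ∈ line2 b d := h ▸ hx0mem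
  simp only [line2, Set.mem_setOf_eq, hx0, real_inner_smul_right, hbla,
    real_inner_smul_left, real_inner_self_eq_norm_sq] at hx0' hx0mem
  have hc : ⟪a, a⟫_ℝ = ‖a‖ ^ 2 := real_inner_self_eq_norm_sq a
  field_simp at hx0' hx0mem ⊢
  have h2 : d * ‖a‖ ^ 2 = l * c * ‖a‖ ^ 2 := by rw [show d = l * c by linarith]
  exact mul_right_cancel₀ hn h2

lemma pointReflection_image_line2 (O a : E2) (γ : ℝ) :
    (AffineEquiv.pointReflection ℝ O : E2 → E2) '' line2 a γ
      = line2 a (-(2 * ⟪a, O⟫_ℝ + γ)) := by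
  ext x
  constructor
  · rintro ⟨y, hy, rfl⟩
    simp only [line2, Set.mem_setOf_eq] at hy ⊢
    simp only [AffineEquiv.pointReflection_apply, vsub_eq_sub, vadd_eq_add]
    rw [inner_add_right, inner_sub_right]
    linarith
  · intro hx
    refine ⟨O - x + O, ?_, ?_⟩
    · simp only [line2, Set.mem_setOf_eq] at hx ⊢
      rw [inner_add_right, inner_sub_right]
      linarith
    · simp only [AffineEquiv.pointReflection_apply, vsub_eq_sub, vadd_eq_add]
      abel

/-- If a convex polygon (a convex set `K` lying on one side of each of the lines
`Lᵢ` containing its sides) is invariant under the point reflection through `O`, which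
also permutes the side lines, then `V(p) = Σ dist(p, Lᵢ)` is constant on the interior. -/
theorem sum_dist_const_of_point_reflection {n : ℕ} (a : Fin n → E2) (γ : Fin n → ℝ)
    (ha : ∀ i, a i ≠ 0) (K : Set E2) (hK : Convex ℝ K)
    (hside : ∀ i, ∀ p ∈ K, 0 ≤ ⟪a i, p⟫_ℝ + γ i)
    (O : E2)
    (hKsym : (AffineEquiv.pointReflection ℝ O : E2 → E2) '' K = K)
    (σ : Equiv.Perm (Fin n))
    (hLsym : ∀ i, (AffineEquiv.pointReflection ℝ O : E2 → E2) '' line2 (a i) (γ i)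
      = line2 (a (σ i)) (γ (σ i))) :
    ∀ p ∈ interior K, ∀ q ∈ interior K, sumDist a γ p = sumDist a γ q := by
  intro p hp q hq
  have hpK : p ∈ K := interior_subset hp
  have hqK : q ∈ K := interior_subset hq
  -- strict positivity at interior points
  have hstrict : ∀ i, ∀ x ∈ interior K, 0 < ⟪a i, x⟫_ℝ + γ i := by
    intro i x hx
    rcases Metric.isOpen_iff.mp isOpen_interior x hx with ⟨ε, hε, hball⟩
    rcases lt_or_ge 0 (⟪a i, x⟫_ℝ + γ i) with h | h
    · exact h
    have hni : (0:ℝ) < ‖a i‖ := norm_pos_iff.mpr (ha i)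
    set y : E2 := x - (ε / (2 * ‖a i‖)) • a i with hy
    have hyb : y ∈ Metric.ball x ε := by
      simp only [hy, mem_ball, dist_eq_norm, sub_sub_cancel_left, norm_neg, norm_smul,
        Real.norm_eq_abs]
      rw [abs_of_pos (by positivity)]
      have h2 : ε / (2 * ‖a i‖) * ‖a i‖ = ε / 2 := by field_simp
      rw [h2]
      linarith
    have hyK : y ∈ K := interior_subset (hball hyb)
    have := hside i y hyK
    have hyval : ⟪a i, y⟫_ℝ + γ i = (⟪a i, x⟫_ℝ + γ i) - (ε / (2 * ‖a i‖)) * ‖a i‖ ^ 2 := by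
      simp only [hy, inner_sub_right, real_inner_smul_right, real_inner_self_eq_norm_sq]
      ring
    have hpos : 0 < ε / (2 * ‖a i‖) * ‖a i‖ ^ 2 := by positivity
    linarith
  -- the unit normals flip under σ
  have hflip : ∀ i, (‖a (σ i)‖)⁻¹ • a (σ i) = -((‖a i‖)⁻¹ • a i) := by
    intro i
    have heq : line2 (a i) (-(2 * ⟪a i, O⟫_ℝ + γ i)) = line2 (a (σ i)) (γ (σ i)) := by
      rw [← pointReflection_image_line2, hLsym i]
    obtain ⟨l, hl0, hba, hd⟩ := line2_eq_imp (a i) (a (σ i)) (ha i) (ha (σ i)) _ _ heq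
    -- 2O - p ∈ K
    have h2O : O - p + O ∈ K := by
      rw [← hKsym]
      exact ⟨p, hpK, by
        simp only [AffineEquiv.pointReflection_apply, vsub_eq_sub, vadd_eq_add]⟩
    have hσside := hside (σ i) _ h2O
    have hval : ⟪a (σ i), O - p + O⟫_ℝ + γ (σ i) = -l * (⟪a i, p⟫_ℝ + γ i) := by
      rw [hba, hd, real_inner_smul_left, inner_add_right, inner_sub_right]
      ring
    have hppos := hstrict i p hp
    have hlneg : l < 0 := by
      rcases hl0.lt_or_gt with hneg | hposl
      · exact hneg
      · exfalso; nlinarith [mul_pos hposl hppos]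
    rw [hba, norm_smul, Real.norm_eq_abs, abs_of_neg hlneg, smul_smul]
    have hni : (0:ℝ) < ‖a i‖ := norm_pos_iff.mpr (ha i)
    rw [← neg_smul]
    congr 1
    field_simp
  -- sum of unit normals is zero
  have hsum0 : ∑ i, (‖a i‖)⁻¹ • a i = 0 := by
    have h1 : ∑ i, (‖a i‖)⁻¹ • a i = ∑ i, (‖a (σ i)‖)⁻¹ • a (σ i) :=
      (Equiv.sum_comp σ (fun i => (‖a i‖)⁻¹ • a i)).symm
    have h2 : ∑ i, (‖a (σ i)‖)⁻¹ • a (σ i) = -∑ i, (‖a i‖)⁻¹ • a i := by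
      rw [← Finset.sum_neg_distrib]
      exact Finset.sum_congr rfl fun i _ => hflip i
    have := h1.trans h2
    have h3 : (2:ℝ) • ∑ i, (‖a i‖)⁻¹ • a i = 0 := by
      rw [two_smul]
      linear_combination (norm := module) this
    have := smul_eq_zero.mp h3
    rcases this with h | h
    · norm_num at h
    · exact h
  -- sumDist is affine with zero linear part
  have key : ∀ x ∈ K, sumDist a γ x = ∑ i, γ i / ‖a i‖ := by
    intro x hx
    have : sumDist a γ x = ∑ i, (⟪a i, x⟫_ℝ + γ i) / ‖a i‖ := by
      unfold sumDist
      refine Finset.sum_congr rfl fun i _ => ?_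
      rw [infDist_line2 (a i) (ha i), abs_of_nonneg (hside i x hx)]
    rw [this]
    have hni : ∀ i : Fin n, (0:ℝ) < ‖a i‖ := fun i => norm_pos_iff.mpr (ha i)
    have hsplit : ∀ i : Fin n, (⟪a i, x⟫_ℝ + γ i) / ‖a i‖
        = ⟪(‖a i‖)⁻¹ • a i, x⟫_ℝ + γ i / ‖a i‖ := by
      intro i
      rw [real_inner_smul_left]
      field_simp
    rw [Finset.sum_congr rfl fun i _ => hsplit i, Finset.sum_add_distrib]
    have : ∑ i, ⟪(‖a i‖)⁻¹ • a i, x⟫_ℝ = ⟪∑ i, (‖a i‖)⁻¹ • a i, x⟫_ℝ := by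
      rw [sum_inner]
    rw [this, hsum0, inner_zero_left, zero_add]
  rw [key p hpK, key q hqK]
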